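/- Let Z be Gamma-distributed with shape N_r and rate 1, and Y be Gamma-distributed with shape N_t-1 and rate N_t/ρ, independent, where N_r, N_t ≥ 1, N_t ≥ 2, ρ > 0. Then for x > 0, P(Z/(Y+1) ≤ x) = 1 - e^{-x}/(1+(ρ/N_t)x)^{N_t-1} · Σ_{k=0}^{N_r-1} Σ_{p=0}^{k} [C(N_t+p-2, p) (ρ/N_t)^p / (k-p)!] · x^k / (1+(ρ/N_t)x)^p. -/

import Mathlib

open MeasureTheory Real Set Finset ProbabilityTheory

lemma aux_hasDeriv (n : ℕ) (hn : 1 ≤ n) (z : ℝ) :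
    HasDerivAt (fun t : ℝ => -(Real.exp (-t) * ∑ k ∈ Finset.range n, t ^ k / k.factorial))
      (z ^ (n - 1) * Real.exp (-z) / (n - 1).factorial) z := by
  obtain ⟨m, rfl⟩ : ∃ m, n = m + 1 := ⟨n - 1, (Nat.succ_pred_eq_of_pos hn).symm⟩
  simp only [Nat.add_sub_cancel]
  have hS : HasDerivAt (fun t : ℝ => ∑ k ∈ Finset.range (m + 1), t ^ k / k.factorial)
      (∑ k ∈ Finset.range m, z ^ k / k.factorial) z := by
    have h1 : HasDerivAt (fun t : ℝ => ∑ k ∈ Finset.range (m + 1), t ^ k / k.factorial)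
        (∑ k ∈ Finset.range (m + 1), (k : ℝ) * z ^ (k - 1) / k.factorial) z := by
      apply HasDerivAt.fun_sum
      intro k _
      simpa [div_eq_mul_inv, mul_comm, mul_left_comm] using
        ((hasDerivAt_pow k z).div_const (k.factorial : ℝ))
    have h2 : ∑ k ∈ Finset.range (m + 1), (k : ℝ) * z ^ (k - 1) / k.factorial
        = ∑ k ∈ Finset.range m, z ^ k / k.factorial := by
      rw [Finset.sum_range_succ']
      simp only [Nat.cast_zero, zero_mul, Nat.factorial_zero, Nat.cast_one, zero_div, add_zero]
      apply Finset.sum_congr rfl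
      intro i _
      rw [Nat.add_sub_cancel, Nat.factorial_succ]
      push_cast
      have : ((i : ℝ) + 1) ≠ 0 := by positivity
      field_simp
    rwa [h2] at h1
  have he : HasDerivAt (fun t : ℝ => Real.exp (-t)) (-Real.exp (-z)) z := by
    simpa using (hasDerivAt_neg z).exp
  have h3 := (he.fun_mul hS).fun_neg
  refine h3.congr_deriv ?_
  rw [Finset.sum_range_succ]
  ring

lemma aux_intervalIntegral (n : ℕ) (hn : 1 ≤ n) {t : ℝ} (ht : 0 ≤ t) :
    ∫ z in (0:ℝ)..t, z ^ (n - 1) * Real.exp (-z) / (n - 1).factorial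
      = 1 - Real.exp (-t) * ∑ k ∈ Finset.range n, t ^ k / k.factorial := by
  rw [intervalIntegral.integral_eq_sub_of_hasDerivAt (fun z _ => aux_hasDeriv n hn z)]
  · obtain ⟨m, rfl⟩ : ∃ m, n = m + 1 := ⟨n - 1, (Nat.succ_pred_eq_of_pos hn).symm⟩
    have h0 : ∑ k ∈ Finset.range (m + 1), (0:ℝ) ^ k / k.factorial = 1 := by
      rw [Finset.sum_range_succ']; simp
    rw [h0, neg_zero, Real.exp_zero]
    ring
  · apply Continuous.intervalIntegrable
    continuity

lemma aux_gamma_Iic (n : ℕ) (hn : 1 ≤ n) {t : ℝ} (ht : 0 ≤ t) :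
    gammaMeasure n 1 (Iic t)
      = ENNReal.ofReal (1 - Real.exp (-t) * ∑ k ∈ Finset.range n, t ^ k / k.factorial) := by
  rw [gammaMeasure, withDensity_apply _ measurableSet_Iic,
    lintegral_Iic_eq_lintegral_Iio_add_Icc _ ht, lintegral_gammaPDF_of_nonpos le_rfl, zero_add]
  have hpdf : ∀ z ∈ Icc (0:ℝ) t, gammaPDF n 1 z
      = ENNReal.ofReal (z ^ (n - 1) * Real.exp (-z) / (n - 1).factorial) := by
    intro z hz
    rw [gammaPDF_of_nonneg hz.1]
    congr 1
    rw [Real.one_rpow]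
    rw [show ((n : ℝ) - 1) = ((n - 1 : ℕ) : ℝ) by
      push_cast [Nat.cast_sub hn]; ring]
    rw [Real.rpow_natCast]
    rw [show ((n : ℝ)) = ((n - 1 : ℕ) : ℝ) + 1 by push_cast [Nat.cast_sub hn]; ring]
    rw [Real.Gamma_nat_eq_factorial]
    rw [one_mul]
    ring
  rw [setLIntegral_congr_fun measurableSet_Icc hpdf]
  rw [← MeasureTheory.ofReal_integral_eq_lintegral_ofReal]
  · rw [integral_Icc_eq_integral_Ioc, ← intervalIntegral.integral_of_le ht,
      aux_intervalIntegral n hn ht]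
  · apply Continuous.integrableOn_Icc
    continuity
  · refine (ae_restrict_iff' measurableSet_Icc).mpr (ae_of_all _ fun z hz => ?_)
    have h0 : (0:ℝ) ≤ z := hz.1
    positivity


lemma aux_gamma_ae_pos (a r : ℝ) : ∀ᵐ y ∂(gammaMeasure a r), 0 < y := by
  rw [ae_iff]
  have hset : {y : ℝ | ¬ 0 < y} = Set.Iic 0 := by ext y; simp
  rw [hset, show Set.Iic (0:ℝ) = Set.Iio 0 ∪ {0} by rw [Set.union_comm, ← Set.Iio_insert]; rfl]
  apply measure_union_null
  · rw [gammaMeasure, withDensity_apply _ measurableSet_Iio]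
    exact lintegral_gammaPDF_of_nonpos le_rfl
  · exact withDensity_absolutelyContinuous volume (gammaPDF a r) (by simp)


lemma aux_integrableOn {s b : ℝ} (hs : -1 < s) (hb : 0 < b) :
    IntegrableOn (fun y : ℝ => y ^ s * Real.exp (-(b * y))) (Ioi 0) := by
  have h := integrableOn_rpow_mul_exp_neg_mul_rpow hs one_pos hb
  simpa [Real.rpow_one, neg_mul] using h

lemma aux_term (m k p : ℕ) (hp : p ≤ k) (lam x : ℝ) (hlam : 0 < lam) (hx : 0 < x) :
    lam^(m+1)/m.factorial * (Real.exp (-x) * x^k / k.factorial) * (k.choose p) *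
      ((1/(lam+x))^(m+1+p) * (m+p).factorial)
    = Real.exp (-x) / ((lam+x)/lam)^(m+1) *
        (((m+p).choose p : ℝ) * (1/lam)^p / (k-p).factorial * x^k / ((lam+x)/lam)^p) := by
  have hq : (0:ℝ) < lam + x := by linarith
  have hfact1 : (k.choose p : ℝ) * p.factorial * (k-p).factorial = k.factorial := by
    exact_mod_cast Nat.choose_mul_factorial_mul_factorial hp
  have hfact2 : ((m+p).choose p : ℝ) * p.factorial * m.factorial = (m+p).factorial := by
    have := Nat.choose_mul_factorial_mul_factorial (Nat.le_add_left p m)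
    simp only [Nat.add_sub_cancel] at this
    exact_mod_cast this
  have hkey : (k.choose p : ℝ) * (m+p).factorial * (k-p).factorial
      = ((m+p).choose p : ℝ) * k.factorial * m.factorial := by
    rw [← hfact1, ← hfact2]; ring
  have hm : (m.factorial : ℝ) ≠ 0 := by positivity
  have hk : (k.factorial : ℝ) ≠ 0 := by positivity
  have hkp : ((k-p).factorial : ℝ) ≠ 0 := by positivity
  have hmp : ((m+p).factorial : ℝ) ≠ 0 := by positivity
  have hc : (k.choose p : ℝ) = ((m+p).choose p : ℝ) * k.factorial * m.factorial / ((m+p).factorial * (k-p).factorial) := by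
    rw [eq_div_iff (mul_ne_zero hmp hkp), ← hkey]; ring
  have hl0 : lam ≠ 0 := hlam.ne'
  have hq0 : lam + x ≠ 0 := hq.ne'
  rw [hc]
  simp only [div_eq_mul_inv, one_mul, mul_pow, inv_pow, inv_inv, mul_inv, pow_add, pow_one]
  field_simp

lemma aux_value (Nr Nt : ℕ) (hNr : 1 ≤ Nr) (hNt : 2 ≤ Nt) (ρ x : ℝ) (hρ : 0 < ρ) (hx : 0 < x) :
    ∫ y in Set.Ioi (0:ℝ), gammaPDFReal ((Nt:ℝ)-1) (Nt/ρ) y *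
        (1 - Real.exp (-(x*(y+1))) * ∑ k ∈ Finset.range Nr, (x*(y+1))^k / k.factorial)
      = 1 - Real.exp (-x) / (1 + ρ / Nt * x) ^ (Nt - 1) *
        ∑ k ∈ Finset.range Nr, ∑ p ∈ Finset.range (k + 1),
          (((Nt + p - 2).choose p : ℝ) * (ρ / Nt) ^ p / (Nat.factorial (k - p))) *
            x ^ k / (1 + ρ / Nt * x) ^ p := by
  set m := Nt - 2 with hmdef
  set lam : ℝ := Nt/ρ with hlamdef
  set a : ℝ := (Nt:ℝ) - 1 with hadef
  have hNt2 : (2:ℝ) ≤ (Nt:ℝ) := by exact_mod_cast hNt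
  have hNtpos : (0:ℝ) < Nt := by linarith
  have hlam : 0 < lam := by positivity
  have ham : a = (m:ℝ) + 1 := by
    have h2 : (Nt:ℕ) = m + 2 := by omega
    rw [hadef, h2]; push_cast; ring
  have ha : 0 < a := by rw [ham]; positivity
  have ha1 : -1 < a - 1 := by
    have : (0:ℝ) ≤ m := Nat.cast_nonneg m
    rw [ham]; linarith
  have hq : 0 < lam + x := by linarith
  have hGamma : Real.Gamma a = m.factorial := by
    rw [ham, Real.Gamma_nat_eq_factorial]
  have hlampow : lam ^ a = lam ^ (m+1) := by
    rw [ham, show ((m:ℝ)+1) = ((m+1:ℕ):ℝ) by push_cast; ring, Real.rpow_natCast]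
  have key : ∀ y ∈ Set.Ioi (0:ℝ), gammaPDFReal a lam y *
        (1 - Real.exp (-(x*(y+1))) * ∑ k ∈ Finset.range Nr, (x*(y+1))^k / k.factorial)
      = lam^(m+1)/m.factorial * (y^(a-1) * Real.exp (-(lam*y)))
        - ∑ k ∈ Finset.range Nr, ∑ p ∈ Finset.range (k+1),
            (lam^(m+1)/m.factorial * (Real.exp (-x) * x^k / k.factorial) * (k.choose p))
              * (y^(a-1+(p:ℝ)) * Real.exp (-((lam+x)*y))) := by
    intro y hy
    rw [Set.mem_Ioi] at hy
    have hpdf : gammaPDFReal a lam y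
        = lam^(m+1)/m.factorial * (y^(a-1) * Real.exp (-(lam*y))) := by
      rw [gammaPDFReal, if_pos hy.le, hGamma, hlampow]; ring
    rw [hpdf, mul_sub, mul_one]
    congr 1
    rw [Finset.mul_sum, Finset.mul_sum]
    apply Finset.sum_congr rfl
    intro k _
    have hbin : (x*(y+1))^k = ∑ p ∈ Finset.range (k+1), x^k * (y^p * (k.choose p : ℝ)) := by
      rw [mul_pow, add_pow, Finset.mul_sum]
      apply Finset.sum_congr rfl
      intro p _
      ring
    rw [hbin, Finset.sum_div, Finset.mul_sum, Finset.mul_sum]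
    apply Finset.sum_congr rfl
    intro p _
    have hyp : y^(a-1+(p:ℝ)) = y^(a-1) * y^p := by
      rw [Real.rpow_add hy, Real.rpow_natCast]
    have hexp1 : Real.exp (-(x*(y+1))) = Real.exp (-x) * Real.exp (-(x*y)) := by
      rw [← Real.exp_add]; congr 1; ring
    have hexp2 : Real.exp (-((lam+x)*y)) = Real.exp (-(lam*y)) * Real.exp (-(x*y)) := by
      rw [← Real.exp_add]; congr 1; ring
    rw [hyp, hexp2, hexp1]
    ring
  have hIntE : ∀ p : ℕ, IntegrableOn
      (fun y : ℝ => y^(a-1+(p:ℝ)) * Real.exp (-((lam+x)*y))) (Ioi 0) := by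
    intro p
    have hp0 : (0:ℝ) ≤ p := Nat.cast_nonneg p
    exact aux_integrableOn (by linarith) hq
  have hIntA : IntegrableOn
      (fun y : ℝ => lam^(m+1)/m.factorial * (y^(a-1) * Real.exp (-(lam*y)))) (Ioi 0) :=
    (aux_integrableOn ha1 hlam).const_mul _
  have hIntB : IntegrableOn (fun y : ℝ => ∑ k ∈ Finset.range Nr, ∑ p ∈ Finset.range (k+1),
      (lam^(m+1)/m.factorial * (Real.exp (-x) * x^k / k.factorial) * (k.choose p))
        * (y^(a-1+(p:ℝ)) * Real.exp (-((lam+x)*y)))) (Ioi 0) :=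
    integrable_finset_sum _ (fun k _ => integrable_finset_sum _ (fun p _ => (hIntE p).const_mul _))
  have hA : ∫ y in Ioi (0:ℝ), lam^(m+1)/m.factorial * (y^(a-1) * Real.exp (-(lam*y))) = 1 := by
    rw [integral_const_mul, integral_rpow_mul_exp_neg_mul_Ioi ha hlam, hGamma,
      show (1/lam)^a = (1/lam)^(m+1) by
        rw [ham, show ((m:ℝ)+1) = ((m+1:ℕ):ℝ) by push_cast; ring, Real.rpow_natCast]]
    have hm0 : (m.factorial : ℝ) ≠ 0 := by positivity
    have hl0 : lam ≠ 0 := hlam.ne'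
    field_simp
    rw [← mul_pow, mul_one_div_cancel hl0, one_pow]
  have hB : ∀ p : ℕ, ∫ y in Ioi (0:ℝ), y^(a-1+(p:ℝ)) * Real.exp (-((lam+x)*y))
      = (1/(lam+x))^(m+1+p) * (m+p).factorial := by
    intro p
    have hp0 : (0:ℝ) ≤ p := Nat.cast_nonneg p
    have h := integral_rpow_mul_exp_neg_mul_Ioi (a := a + (p:ℝ)) (r := lam + x) (by linarith) hq
    rw [show a + (p:ℝ) - 1 = a - 1 + (p:ℝ) by ring] at h
    rw [h]
    congr 1
    · rw [ham, show ((m:ℝ)+1+(p:ℕ)) = ((m+1+p:ℕ):ℝ) by push_cast; ring, Real.rpow_natCast]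
    · rw [ham, show ((m:ℝ)+1+(p:ℕ)) = ((m+p:ℕ):ℝ)+1 by push_cast; ring,
        Real.Gamma_nat_eq_factorial]
  rw [setIntegral_congr_fun measurableSet_Ioi key, integral_sub hIntA hIntB, hA,
    integral_finset_sum _ (fun k _ => integrable_finset_sum _ (fun p _ => (hIntE p).const_mul _))]
  congr 1
  rw [Finset.mul_sum]
  apply Finset.sum_congr rfl
  intro k hk
  rw [integral_finset_sum _ (fun p _ => (hIntE p).const_mul _), Finset.mul_sum]
  apply Finset.sum_congr rfl
  intro p hp
  rw [integral_const_mul, hB p]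
  have hrw1 : 1 + ρ/Nt * x = (lam+x)/lam := by
    rw [hlamdef]; field_simp
  have hrw2 : (ρ:ℝ)/Nt = 1/lam := by rw [hlamdef, one_div_div]
  have hrw3 : Nt + p - 2 = m + p := by omega
  have hrw4 : Nt - 1 = m + 1 := by omega
  rw [hrw1, hrw2, hrw3, hrw4]
  exact aux_term m k p (Nat.lt_succ_iff.mp (Finset.mem_range.mp hp)) lam x hlam hx

lemma aux_F01 (n : ℕ) {t : ℝ} (ht : 0 ≤ t) :
    0 ≤ 1 - Real.exp (-t) * ∑ k ∈ Finset.range n, t^k / k.factorial ∧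
    1 - Real.exp (-t) * ∑ k ∈ Finset.range n, t^k / k.factorial ≤ 1 := by
  have hsum0 : 0 ≤ ∑ k ∈ Finset.range n, t^k / k.factorial :=
    Finset.sum_nonneg (fun k _ => by positivity)
  have hsum1 : ∑ k ∈ Finset.range n, t^k / k.factorial ≤ Real.exp t :=
    Real.sum_le_exp_of_nonneg ht n
  constructor
  · have h1 : Real.exp (-t) * (∑ k ∈ Finset.range n, t^k / k.factorial)
        ≤ Real.exp (-t) * Real.exp t :=
      mul_le_mul_of_nonneg_left hsum1 (Real.exp_pos _).le
    rw [← Real.exp_add] at h1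
    simp only [neg_add_cancel, Real.exp_zero] at h1
    linarith
  · nlinarith [Real.exp_pos (-t)]

theorem stmt0 {Ω : Type*} [MeasurableSpace Ω] (μ : Measure Ω) [IsProbabilityMeasure μ]
    (Nr Nt : ℕ) (hNr : 1 ≤ Nr) (hNt : 2 ≤ Nt) (ρ : ℝ) (hρ : 0 < ρ)
    (Z Y : Ω → ℝ) (hZY : IndepFun Z Y μ)
    (hZ : μ.map Z = gammaMeasure Nr 1)
    (hY : μ.map Y = gammaMeasure ((Nt : ℝ) - 1) (Nt / ρ))
    (x : ℝ) (hx : 0 < x) :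
    (μ {ω | Z ω / (Y ω + 1) ≤ x}).toReal =
      1 - Real.exp (-x) / (1 + ρ / Nt * x) ^ (Nt - 1) *
        ∑ k ∈ Finset.range Nr, ∑ p ∈ Finset.range (k + 1),
          (((Nt + p - 2).choose p : ℝ) * (ρ / Nt) ^ p / (Nat.factorial (k - p))) *
            x ^ k / (1 + ρ / Nt * x) ^ p := by
  have hNt2 : (2:ℝ) ≤ (Nt:ℝ) := by exact_mod_cast hNt
  set a : ℝ := (Nt:ℝ) - 1 with hadef
  set lam : ℝ := (Nt:ℝ)/ρ with hlamdef
  have hNtpos : (0:ℝ) < Nt := by linarith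
  have hlam : 0 < lam := by positivity
  have ha : 0 < a := by rw [hadef]; linarith
  have hNrpos : (0:ℝ) < Nr := by
    have : 0 < Nr := hNr
    exact_mod_cast this
  haveI instZ : IsProbabilityMeasure (gammaMeasure Nr 1) :=
    isProbabilityMeasure_gammaMeasure hNrpos one_pos
  haveI instY : IsProbabilityMeasure (gammaMeasure a lam) :=
    isProbabilityMeasure_gammaMeasure ha hlam
  have hZm : AEMeasurable Z μ := by
    by_contra h
    rw [Measure.map_of_not_aemeasurable h] at hZ
    have h1 := instZ.measure_univ
    rw [← hZ] at h1
    simp at h1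
  have hYm : AEMeasurable Y μ := by
    by_contra h
    rw [Measure.map_of_not_aemeasurable h] at hY
    have h1 := instY.measure_univ
    rw [← hY] at h1
    simp at h1
  have hmap : μ.map (fun ω => (Z ω, Y ω)) = (gammaMeasure Nr 1).prod (gammaMeasure a lam) := by
    rw [← hZ, ← hY]
    exact (ProbabilityTheory.indepFun_iff_map_prod_eq_prod_map_map hZm hYm).mp hZY
  have hsmeas : MeasurableSet {p : ℝ × ℝ | p.1 / (p.2 + 1) ≤ x} :=
    measurableSet_le (measurable_fst.div (measurable_snd.add_const 1)) measurable_const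
  have h1 : μ {ω | Z ω / (Y ω + 1) ≤ x}
      = ((gammaMeasure Nr 1).prod (gammaMeasure a lam)) {p : ℝ × ℝ | p.1 / (p.2 + 1) ≤ x} := by
    rw [← hmap, Measure.map_apply_of_aemeasurable (hZm.prodMk hYm) hsmeas]
    rfl
  have h2 : ((gammaMeasure Nr 1).prod (gammaMeasure a lam)) {p : ℝ × ℝ | p.1 / (p.2 + 1) ≤ x}
      = ∫⁻ y, (gammaMeasure Nr 1) {z : ℝ | z / (y + 1) ≤ x} ∂(gammaMeasure a lam) := by
    rw [Measure.prod_apply_symm hsmeas]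
    simp only [Set.preimage_setOf_eq]
  have h3 : ∫⁻ y, (gammaMeasure Nr 1) {z : ℝ | z / (y + 1) ≤ x} ∂(gammaMeasure a lam)
      = ∫⁻ y, ENNReal.ofReal
          (1 - Real.exp (-(x*(y+1))) * ∑ k ∈ Finset.range Nr, (x*(y+1))^k / k.factorial)
          ∂(gammaMeasure a lam) := by
    apply lintegral_congr_ae
    filter_upwards [aux_gamma_ae_pos a lam] with y hy
    have hy1 : (0:ℝ) < y + 1 := by linarith
    have hset : {z : ℝ | z / (y + 1) ≤ x} = Set.Iic (x*(y+1)) := by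
      ext z
      simp only [Set.mem_setOf_eq, Set.mem_Iic]
      rw [div_le_iff₀ hy1]
    rw [hset, aux_gamma_Iic Nr hNr (by positivity)]
  have hΦcont : Continuous (fun y : ℝ =>
      1 - Real.exp (-(x*(y+1))) * ∑ k ∈ Finset.range Nr, (x*(y+1))^k / k.factorial) := by
    fun_prop
  have h4 : ∫⁻ y, ENNReal.ofReal
        (1 - Real.exp (-(x*(y+1))) * ∑ k ∈ Finset.range Nr, (x*(y+1))^k / k.factorial)
        ∂(gammaMeasure a lam)
      = ∫⁻ y in Set.Ioi 0, ENNReal.ofReal (gammaPDFReal a lam y *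
          (1 - Real.exp (-(x*(y+1))) * ∑ k ∈ Finset.range Nr, (x*(y+1))^k / k.factorial)) := by
    have hpdfmeas : Measurable (gammaPDF a lam) :=
      (measurable_gammaPDFReal a lam).ennreal_ofReal
    rw [gammaMeasure, lintegral_withDensity_eq_lintegral_mul _
      hpdfmeas hΦcont.measurable.ennreal_ofReal]
    rw [← lintegral_add_compl _ (measurableSet_Iic (a := (0:ℝ)))]
    have hIic : ∫⁻ y in Set.Iic (0:ℝ), (gammaPDF a lam * fun y => ENNReal.ofReal
        (1 - Real.exp (-(x*(y+1))) * ∑ k ∈ Finset.range Nr, (x*(y+1))^k / k.factorial)) y = 0 := by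
      rw [setLIntegral_congr (Iio_ae_eq_Iic (a := (0:ℝ))).symm,
        setLIntegral_congr_fun measurableSet_Iio
          (fun y (hy : y < 0) => by
            simp only [Pi.mul_apply]
            rw [gammaPDF_of_neg hy, zero_mul]),
        lintegral_zero]
    rw [hIic, zero_add, compl_Iic]
    apply setLIntegral_congr_fun measurableSet_Ioi
    intro y hy
    simp only [Pi.mul_apply]
    rw [show gammaPDF a lam y = ENNReal.ofReal (gammaPDFReal a lam y) from rfl,
      ← ENNReal.ofReal_mul (gammaPDFReal_nonneg ha hlam y)]
  have hpdfInt : IntegrableOn (gammaPDFReal a lam) (Set.Ioi 0) := by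
    have ha1 : -1 < a - 1 := by rw [hadef]; linarith
    apply MeasureTheory.IntegrableOn.congr_fun
      ((aux_integrableOn ha1 hlam).const_mul (lam^a / Real.Gamma a)) ?_ measurableSet_Ioi
    intro y hy
    rw [gammaPDFReal, if_pos (le_of_lt hy)]
    ring
  have hψint : IntegrableOn (fun y => gammaPDFReal a lam y *
      (1 - Real.exp (-(x*(y+1))) * ∑ k ∈ Finset.range Nr, (x*(y+1))^k / k.factorial))
      (Set.Ioi 0) := by
    apply Integrable.mono' hpdfInt
      (((measurable_gammaPDFReal a lam).mul hΦcont.measurable).aestronglyMeasurable)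
    refine (ae_restrict_iff' measurableSet_Ioi).mpr (ae_of_all _ (fun y hy => ?_))
    have harg : 0 ≤ x * (y + 1) := by
      have : (0:ℝ) < y := hy
      positivity
    obtain ⟨hF0, hF1⟩ := aux_F01 Nr harg
    rw [Real.norm_eq_abs, Pi.mul_apply, abs_mul, abs_of_nonneg (gammaPDFReal_nonneg ha hlam y),
      abs_of_nonneg hF0]
    calc gammaPDFReal a lam y * _ ≤ gammaPDFReal a lam y * 1 :=
          mul_le_mul_of_nonneg_left hF1 (gammaPDFReal_nonneg ha hlam y)
      _ = gammaPDFReal a lam y := mul_one _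
  have hψnn : 0 ≤ᵐ[volume.restrict (Set.Ioi 0)] (fun y => gammaPDFReal a lam y *
      (1 - Real.exp (-(x*(y+1))) * ∑ k ∈ Finset.range Nr, (x*(y+1))^k / k.factorial)) := by
    refine (ae_restrict_iff' measurableSet_Ioi).mpr (ae_of_all _ (fun y hy => ?_))
    have harg : 0 ≤ x * (y + 1) := by
      have : (0:ℝ) < y := hy
      positivity
    exact mul_nonneg (gammaPDFReal_nonneg ha hlam y) (aux_F01 Nr harg).1
  have h5 : ∫⁻ y in Set.Ioi 0, ENNReal.ofReal (gammaPDFReal a lam y *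
        (1 - Real.exp (-(x*(y+1))) * ∑ k ∈ Finset.range Nr, (x*(y+1))^k / k.factorial))
      = ENNReal.ofReal (∫ y in Set.Ioi 0, gammaPDFReal a lam y *
        (1 - Real.exp (-(x*(y+1))) * ∑ k ∈ Finset.range Nr, (x*(y+1))^k / k.factorial)) :=
    (ofReal_integral_eq_lintegral_ofReal hψint hψnn).symm
  rw [h1, h2, h3, h4, h5, ENNReal.toReal_ofReal (setIntegral_nonneg measurableSet_Ioi
    (fun y hy => by
      have harg : 0 ≤ x * (y + 1) := by
        have : (0:ℝ) < y := hy
        positivity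
      exact mul_nonneg (gammaPDFReal_nonneg ha hlam y) (aux_F01 Nr harg).1))]
  exact aux_value Nr Nt hNr hNt ρ x hρ hx
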